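/- Suboptimality bound: let c_θ ∈ ℝ^m, let C ⊆ ℝ^m be a nonempty closed convex set with ‖c‖₂ ≥ δ > 0 for all c ∈ C, let x̂, x* ∈ [0,1]^m, and suppose ⟨c_θ, x*⟩ ≥ ⟨c_θ, x̂⟩. Then ⟨P_C(c_θ)/‖P_C(c_θ)‖, x̂ - x*⟩ ≤ (1/δ) √m · ‖P_C(c_θ) - c_θ‖, where P_C denotes Euclidean projection onto C. -/

import Mathlib

theorem suboptimality_bound (m : ℕ)
    (C : Set (EuclideanSpace ℝ (Fin m))) (hne : C.Nonempty) (hclosed : IsClosed C)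
    (hconv : Convex ℝ C) (δ : ℝ) (hδ : 0 < δ) (hCδ : ∀ c ∈ C, δ ≤ ‖c‖)
    (cθ xhat xstar : EuclideanSpace ℝ (Fin m))
    (hxhat : ∀ j, xhat j ∈ Set.Icc (0 : ℝ) 1) (hxstar : ∀ j, xstar j ∈ Set.Icc (0 : ℝ) 1)
    (hopt : (inner ℝ cθ xhat : ℝ) ≤ inner ℝ cθ xstar)
    (p : EuclideanSpace ℝ (Fin m)) (hpC : p ∈ C)
    (hproj : ∀ w ∈ C, ‖cθ - p‖ ≤ ‖cθ - w‖) :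
    (inner ℝ ((‖p‖)⁻¹ • p) (xhat - xstar) : ℝ) ≤ (1 / δ) * Real.sqrt m * ‖p - cθ‖ := by
  have hpδ : δ ≤ ‖p‖ := hCδ p hpC
  have hpnorm : (0:ℝ) < ‖p‖ := lt_of_lt_of_le hδ hpδ
  -- norm bound on xhat - xstar
  have hdiff : ‖xhat - xstar‖ ≤ Real.sqrt m := by
    rw [EuclideanSpace.norm_eq]
    apply Real.sqrt_le_sqrt
    calc ∑ i, ‖(xhat - xstar) i‖ ^ 2 ≤ ∑ i : Fin m, (1:ℝ) := by
          apply Finset.sum_le_sum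
          intro i _
          have h1 := hxhat i
          have h2 := hxstar i
          simp only [Set.mem_Icc] at h1 h2
          have : |(xhat - xstar) i| ≤ 1 := by
            have : (xhat - xstar) i = xhat i - xstar i := rfl
            rw [this, abs_le]; constructor <;> linarith [h1.1, h1.2, h2.1, h2.2]
          calc ‖(xhat - xstar) i‖ ^ 2 = |(xhat - xstar) i| ^ 2 := by rw [Real.norm_eq_abs]
            _ ≤ 1 ^ 2 := by apply pow_le_pow_left₀ (abs_nonneg _) this
            _ = 1 := one_pow 2
      _ = m := by simp
  have key : (inner ℝ p (xhat - xstar) : ℝ) ≤ Real.sqrt m * ‖p - cθ‖ := by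
    have hsplit : (inner ℝ p (xhat - xstar) : ℝ)
        = inner ℝ (p - cθ) (xhat - xstar) + inner ℝ cθ (xhat - xstar) := by
      rw [← inner_add_left, sub_add_cancel]
    have h1 : (inner ℝ (p - cθ) (xhat - xstar) : ℝ) ≤ ‖p - cθ‖ * ‖xhat - xstar‖ :=
      real_inner_le_norm _ _
    have h2 : (inner ℝ cθ (xhat - xstar) : ℝ) ≤ 0 := by
      rw [inner_sub_right]; linarith
    have h3 : ‖p - cθ‖ * ‖xhat - xstar‖ ≤ ‖p - cθ‖ * Real.sqrt m :=
      mul_le_mul_of_nonneg_left hdiff (norm_nonneg _)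
    rw [hsplit]
    nlinarith
  have hmul : (inner ℝ ((‖p‖)⁻¹ • p) (xhat - xstar) : ℝ)
      = ‖p‖⁻¹ * inner ℝ p (xhat - xstar) := by
    rw [real_inner_smul_left]
  rw [hmul]
  have hrhs_nonneg : (0:ℝ) ≤ Real.sqrt m * ‖p - cθ‖ :=
    mul_nonneg (Real.sqrt_nonneg _) (norm_nonneg _)
  have hinv : ‖p‖⁻¹ ≤ δ⁻¹ := by
    apply inv_anti₀ hδ hpδ
  calc ‖p‖⁻¹ * inner ℝ p (xhat - xstar)
      ≤ ‖p‖⁻¹ * (Real.sqrt m * ‖p - cθ‖) := by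
        apply mul_le_mul_of_nonneg_left key (le_of_lt (inv_pos.mpr hpnorm))
    _ ≤ δ⁻¹ * (Real.sqrt m * ‖p - cθ‖) := mul_le_mul_of_nonneg_right hinv hrhs_nonneg
    _ = (1 / δ) * Real.sqrt m * ‖p - cθ‖ := by rw [one_div]; ring
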